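/- arXiv:1206.5703 — 6 statements merged into one kernel-verified Lean document; each statement's English description precedes it below -/
import Mathlib

section
/- Let X be a Banach space, S ⊆ L(X) a semigroup of bounded operators containing the identity, (A_α)_{α∈Λ} a net of bounded operators on X, and x ∈ X such that lim_α (S−I)A_α x = 0 in norm for all S ∈ S. Suppose Z ⊆ X* separates points of X and S*Z ⊆ Z for all S ∈ S. Then every σ(X,Z)-cluster point of the net (A_α x) belongs to fix(S) = ⋂_{S∈S} ker(I−S). -/
open Filter Topology


private lemma aux_cluster {X : Type*} [TopologicalSpace X] {ι : Type*} {F : Filter ι}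
    {u : ι → X} {w : X} (hw : MapClusterPt w F u) {f g : X → ℝ}
    (hf : Continuous f) (hg : Continuous g)
    (ht : Tendsto (fun α => g (u α) - f (u α)) F (nhds 0)) : g w = f w := by
  have hfg : Continuous (fun v : X => ((f v, g v) : ℝ × ℝ)) := hf.prodMk hg
  have hcl : MapClusterPt ((f w, g w) : ℝ × ℝ) F
      ((fun v : X => ((f v, g v) : ℝ × ℝ)) ∘ u) :=
    MapClusterPt.continuousAt_comp hfg.continuousAt hw
  have hsub : Continuous (fun p : ℝ × ℝ => p.2 - p.1) := by continuity
  have hcl2 : MapClusterPt (g w - f w) F (fun α => g (u α) - f (u α)) := by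
    have h3 := MapClusterPt.continuousAt_comp hsub.continuousAt hcl
    simpa [Function.comp_def] using h3
  have h4 : g w - f w = 0 := eq_of_nhds_neBot (hcl2.clusterPt.mono ht)
  linarith

/-- Lemma 4.4: every `σ(X,Z)`-cluster point of the net `(A_α x)` belongs to the
fixed space of the semigroup `𝒮`, provided `(S-I)A_α x → 0` in norm for all `S ∈ 𝒮`,
`Z ⊆ X*` separates points of `X` and `S*Z ⊆ Z`. -/
theorem stmt1 {X : Type*} [NormedAddCommGroup X] [NormedSpace ℝ X] [CompleteSpace X]
    (𝒮 : Set (X →L[ℝ] X)) (hone : (1 : X →L[ℝ] X) ∈ 𝒮)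
    (hmul : ∀ s ∈ 𝒮, ∀ t ∈ 𝒮, s.comp t ∈ 𝒮)
    {ι : Type*} [Preorder ι] [Nonempty ι] [IsDirected ι (· ≤ ·)]
    (A : ι → X →L[ℝ] X) (x : X)
    (hconv : ∀ s ∈ 𝒮, Tendsto (fun α : ι => s (A α x) - A α x) atTop (nhds 0))
    (Z : Submodule ℝ (X →L[ℝ] ℝ))
    (hsep : ∀ v : X, v ≠ 0 → ∃ z ∈ Z, z v ≠ 0)
    (hinv : ∀ s ∈ 𝒮, ∀ z ∈ Z, z.comp s ∈ Z)
    (w : X)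
    (hw : @MapClusterPt X
      (TopologicalSpace.induced (fun v : X => fun z : Z => (z : X →L[ℝ] ℝ) v)
        Pi.topologicalSpace)
      ι w atTop (fun α : ι => A α x)) :
    ∀ s ∈ 𝒮, s w = w := by
  intro s hs
  have key : ∀ z ∈ Z, z (s w) = z w := by
    intro z hz
    have hzs : (z.comp s) ∈ Z := hinv s hs z hz
    have hcont : ∀ y ∈ Z, Continuous[TopologicalSpace.induced
        (fun v : X => fun z : Z => (z : X →L[ℝ] ℝ) v) Pi.topologicalSpace, _]
        (fun v : X => y v) := by
      intro y hy
      have h1 : Continuous (fun f : Z → ℝ => f ⟨y, hy⟩) := continuous_apply _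
      exact @Continuous.comp X (Z → ℝ) ℝ
        (TopologicalSpace.induced (fun v : X => fun z : Z => (z : X →L[ℝ] ℝ) v)
          Pi.topologicalSpace) _ _ _ _ h1 continuous_induced_dom
    have ht : Tendsto (fun α : ι => (z.comp s) (A α x) - z (A α x)) atTop (nhds 0) := by
      have h2 := (z.continuous.tendsto 0).comp (hconv s hs)
      simpa [Function.comp_def, map_sub] using h2
    exact @aux_cluster X (TopologicalSpace.induced
        (fun v : X => fun z : Z => (z : X →L[ℝ] ℝ) v) Pi.topologicalSpace)
      ι atTop (fun α : ι => A α x) w hw (fun v : X => z v) (fun v : X => (z.comp s) v)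
      (hcont z hz) (hcont _ hzs) ht
  by_contra hne
  have hz0 : s w - w ≠ 0 := sub_ne_zero.mpr hne
  obtain ⟨z, hz, hzv⟩ := hsep _ hz0
  exact hzv (by rw [map_sub, key z hz, sub_self])
end

section
/- Let (S, A) be an average scheme on a norming dual pair (X,Y), let τ be a locally convex topology on X finer than σ(X,Y), and set X₁ := {x ∈ X : the net (A_α x) clusters in (X,τ)}. If fix(S') separates fix(S), then τ-lim_α A_α x exists in X for every x ∈ X₁. -/
open Filter Topology Set

noncomputable section

/-- A norming dual pair `(X, Y, ⟨·,·⟩)`: Banach spaces `X`, `Y` with a bilinear duality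
such that each norm is recovered as a supremum of pairings against the unit ball. -/
structure NormingDualPair (X Y : Type*) [NormedAddCommGroup X] [NormedSpace ℝ X]
    [NormedAddCommGroup Y] [NormedSpace ℝ Y] : Type _ where
  p : X →ₗ[ℝ] Y →ₗ[ℝ] ℝ
  norm_eq_left : ∀ x : X, ‖x‖ = ⨆ y : {y : Y // ‖y‖ ≤ 1}, |p x y.1|
  norm_eq_right : ∀ y : Y, ‖y‖ = ⨆ x : {x : X // ‖x‖ ≤ 1}, |p x.1 y|

variable {X Y : Type*} [NormedAddCommGroup X] [NormedSpace ℝ X]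
  [NormedAddCommGroup Y] [NormedSpace ℝ Y]

/-- The weak topology `σ(X,Y)` on `X` induced by the pairing. -/
def NormingDualPair.sigma (ndp : NormingDualPair X Y) : TopologicalSpace X :=
  TopologicalSpace.induced (fun x => fun y : Y => ndp.p x y) Pi.topologicalSpace

/-- The weak topology `σ(Y,X)` on `Y` induced by the pairing. -/
def NormingDualPair.sigma' (ndp : NormingDualPair X Y) : TopologicalSpace Y :=
  TopologicalSpace.induced (fun y => fun x : X => ndp.p x y) Pi.topologicalSpace

/-- The fixed space `fix(𝒮) = ⋂_{S ∈ 𝒮} ker (I - S)`. -/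
def fixedSpace (S : Set (X →L[ℝ] X)) : Set X := {x | ∀ s ∈ S, s x = x}

/-- The range `rg(I - 𝒮) = {x - Sx : x ∈ X, S ∈ 𝒮}`. -/
def rangeIminus (S : Set (X →L[ℝ] X)) : Set X := {z | ∃ x : X, ∃ s ∈ S, z = x - s x}

/-- An average scheme `(𝒮, (A_α)_{α ∈ ι})` on a norming dual pair `(X,Y)`:
a semigroup `𝒮 ⊆ L(X,σ)` (σ-continuity encoded via the existence of adjoints on `Y`)
and a net of σ-continuous operators satisfying (AS1)-(AS3). -/
structure AverageScheme (ndp : NormingDualPair X Y) (ι : Type*) [Preorder ι] : Type _ where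
  S : Set (X →L[ℝ] X)
  adj : (X →L[ℝ] X) → (Y →L[ℝ] Y)
  one_mem : (1 : X →L[ℝ] X) ∈ S
  comp_mem : ∀ s ∈ S, ∀ t ∈ S, s.comp t ∈ S
  adj_spec : ∀ s ∈ S, ∀ (x : X) (y : Y), ndp.p (s x) y = ndp.p x (adj s y)
  A : ι → (X →L[ℝ] X)
  A' : ι → (Y →L[ℝ] Y)
  A'_spec : ∀ (α : ι) (x : X) (y : Y), ndp.p (A α x) y = ndp.p x (A' α y)
  normBound : ∃ M : ℝ, ∀ α : ι, ‖A α‖ ≤ M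
  as2 : ∀ (α : ι) (x : X),
    A α x ∈ @closure X ndp.sigma (convexHull ℝ {z | ∃ s ∈ S, z = s x})
  as2' : ∀ (α : ι) (y : Y),
    A' α y ∈ @closure Y ndp.sigma' (convexHull ℝ {z | ∃ s ∈ S, z = adj s y})
  as3_left : ∀ s ∈ S, ∀ x : X, Tendsto (fun α : ι => A α (s x - x)) atTop (nhds 0)
  as3_right : ∀ s ∈ S, ∀ x : X, Tendsto (fun α : ι => s (A α x) - A α x) atTop (nhds 0)
  as3'_left : ∀ s ∈ S, ∀ y : Y, Tendsto (fun α : ι => A' α (adj s y - y)) atTop (nhds 0)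
  as3'_right : ∀ s ∈ S, ∀ y : Y, Tendsto (fun α : ι => adj s (A' α y) - A' α y) atTop (nhds 0)

/-- The fixed space of the adjoint semigroup `fix(𝒮')` in `Y`. -/
def AverageScheme.fix' {ι : Type*} [Preorder ι] {ndp : NormingDualPair X Y}
    (AS : AverageScheme ndp ι) : Set Y := {y | ∀ s ∈ AS.S, AS.adj s y = y}

/-- The range `rg(I - 𝒮')` in `Y`. -/
def AverageScheme.rg' {ι : Type*} [Preorder ι] {ndp : NormingDualPair X Y}
    (AS : AverageScheme ndp ι) : Set Y := {z | ∃ y : Y, ∃ s ∈ AS.S, z = y - AS.adj s y}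

/-- A filter (net) clusters in a topology: every finer nontrivial filter (subnet) has a
cluster point (i.e. a convergent subnet). -/
def ClustersIn {Z : Type*} (τ : TopologicalSpace Z) (F : Filter Z) : Prop :=
  ∀ G : Filter Z, G ≤ F → G.NeBot → ∃ z : Z, @ClusterPt Z τ z G

/-- Weak ergodicity: `σ`-convergence of `A_α x` for every `x` and `σ'`-convergence of
`A'_α y` for every `y`. -/
def AverageScheme.WeaklyErgodic {ι : Type*} [Preorder ι] {ndp : NormingDualPair X Y}
    (AS : AverageScheme ndp ι) : Prop :=
  (∀ x : X, ∃ l : X, Tendsto (fun α : ι => AS.A α x) atTop (@nhds X ndp.sigma l)) ∧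
  (∀ y : Y, ∃ l : Y, Tendsto (fun α : ι => AS.A' α y) atTop (@nhds Y ndp.sigma' l))

/-- The fixed space as a submodule. -/
def fixedSubmodule (S : Set (X →L[ℝ] X)) : Submodule ℝ X where
  carrier := {x | ∀ s ∈ S, s x = x}
  add_mem' := by
    intro a b ha hb s hs
    simp only [Set.mem_setOf_eq] at *
    rw [map_add, ha s hs, hb s hs]
  zero_mem' := by
    intro s hs
    simp
  smul_mem' := by
    intro c x hx s hs
    simp only [Set.mem_setOf_eq] at *
    rw [map_smul, hx s hs]

/-- Pairing bound from the norming property. -/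
lemma NormingDualPair.pairing_le (ndp : NormingDualPair X Y) (x : X) (y : Y) :
    |ndp.p x y| ≤ ‖x‖ * ‖y‖ := by
  rcases eq_or_ne y 0 with rfl | hy
  · simp
  by_cases hb : BddAbove (Set.range fun y : {y : Y // ‖y‖ ≤ 1} => |ndp.p x y.1|)
  · have hy' : (0:ℝ) < ‖y‖ := norm_pos_iff.mpr hy
    have h1 : ‖(‖y‖⁻¹ • y)‖ ≤ 1 := by
      rw [norm_smul, norm_inv, norm_norm]
      rw [inv_mul_cancel₀ hy'.ne']
    have h2 := le_ciSup hb ⟨‖y‖⁻¹ • y, h1⟩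
    rw [← ndp.norm_eq_left] at h2
    have h3 : ndp.p x (‖y‖⁻¹ • y) = ‖y‖⁻¹ * ndp.p x y := by
      rw [map_smul]; rfl
    rw [h3, abs_mul, abs_inv, abs_norm] at h2
    calc |ndp.p x y| = ‖y‖ * (‖y‖⁻¹ * |ndp.p x y|) := by field_simp
      _ ≤ ‖y‖ * ‖x‖ := by
          exact mul_le_mul_of_nonneg_left h2 hy'.le
      _ = ‖x‖ * ‖y‖ := mul_comm _ _
  · have h0 : ‖x‖ = 0 := by
      rw [ndp.norm_eq_left x, Real.iSup_of_not_bddAbove hb]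
    have hx : x = 0 := norm_eq_zero.mp h0
    simp [hx]

/-- If all pairings vanish, the element is zero. -/
lemma NormingDualPair.eq_zero_of_pairings (ndp : NormingDualPair X Y) (x : X)
    (h : ∀ y : Y, ndp.p x y = 0) : x = 0 := by
  have h0 : ‖x‖ = 0 := by
    rw [ndp.norm_eq_left x]
    have : (fun y : {y : Y // ‖y‖ ≤ 1} => |ndp.p x y.1|) = fun _ => (0:ℝ) := by
      funext y; simp [h y.1]
    rw [this]
    haveI : Nonempty {y : Y // ‖y‖ ≤ 1} := ⟨⟨0, by simp⟩⟩
    exact ciSup_const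
  exact norm_eq_zero.mp h0

/-- The pairing against a fixed `y` is `σ(X,Y)`-continuous. -/
lemma NormingDualPair.sigma_cont (ndp : NormingDualPair X Y) (y : Y) :
    Continuous[ndp.sigma, inferInstance] fun x => ndp.p x y := by
  have h1 : Continuous[ndp.sigma, Pi.topologicalSpace]
      (fun x : X => fun y : Y => ndp.p x y) := continuous_induced_dom
  exact @Continuous.comp X (Y → ℝ) ℝ ndp.sigma _ _ _ _ (continuous_apply y) h1

/-- The pairing against a fixed `x` is `σ(Y,X)`-continuous. -/
lemma NormingDualPair.sigma'_cont (ndp : NormingDualPair X Y) (x : X) :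
    Continuous[ndp.sigma', inferInstance] fun y => ndp.p x y := by
  have h1 : Continuous[ndp.sigma', Pi.topologicalSpace]
      (fun y : Y => fun x : X => ndp.p x y) := continuous_induced_dom
  exact @Continuous.comp Y (X → ℝ) ℝ ndp.sigma' _ _ _ _ (continuous_apply x) h1

/-- Pairing with norm-null nets tends to zero. -/
lemma NormingDualPair.tendsto_pair_zero {ι : Type*} [Preorder ι]
    (ndp : NormingDualPair X Y) {v : ι → X} (y : Y)
    (h : Tendsto v atTop (nhds 0)) :
    Tendsto (fun α => ndp.p (v α) y) atTop (nhds 0) := by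
  apply squeeze_zero_norm (a := fun α => ‖v α‖ * ‖y‖)
  · intro α
    simpa [Real.norm_eq_abs] using ndp.pairing_le (v α) y
  · have := (h.norm).mul_const ‖y‖
    simpa using this

/-- For `y ∈ fix(𝒮')` the pairing `⟨A_α x, y⟩` is constantly `⟨x, y⟩`. -/
lemma AverageScheme.pair_const {ι : Type*} [Preorder ι] {ndp : NormingDualPair X Y}
    (AS : AverageScheme ndp ι) {y : Y} (hy : y ∈ AS.fix') (α : ι) (x : X) :
    ndp.p (AS.A α x) y = ndp.p x y := by
  have h := AS.as2' α y
  have hset : {z | ∃ s ∈ AS.S, z = AS.adj s y} = {y} := by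
    ext z
    constructor
    · rintro ⟨s, hs, rfl⟩; simp [hy s hs]
    · rintro rfl; exact ⟨1, AS.one_mem, (hy 1 AS.one_mem).symm⟩
  rw [hset, convexHull_singleton] at h
  have hc : ndp.p x (AS.A' α y) = ndp.p x y := by
    have hcont := ndp.sigma'_cont x
    have hmaps : Set.MapsTo (fun y' => ndp.p x y') ({y} : Set Y) ({ndp.p x y} : Set ℝ) := by
      intro z hz; simp at hz; simp [hz]
    have hmem := @map_mem_closure Y ℝ ndp.sigma' _ (fun y' => ndp.p x y')
      ({y} : Set Y) (AS.A' α y) ({ndp.p x y} : Set ℝ) hcont h hmaps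
    simpa using hmem
  rw [AS.A'_spec, hc]

theorem stmt6 {ι : Type*} [Preorder ι] [Nonempty ι] [IsDirected ι (· ≤ ·)]
    (ndp : NormingDualPair X Y) (AS : AverageScheme ndp ι)
    (τ : TopologicalSpace X) (hτ : τ ≤ ndp.sigma)
    (hsep : ∀ x ∈ fixedSpace AS.S, x ≠ 0 → ∃ y ∈ AS.fix', ndp.p x y ≠ 0) :
    ∀ x : X, ClustersIn τ (Filter.map (fun α : ι => AS.A α x) atTop) →
      ∃ l : X, Tendsto (fun α : ι => AS.A α x) atTop (@nhds X τ l) := by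
  intro x hcl
  set F : Filter X := Filter.map (fun α : ι => AS.A α x) atTop with hF
  haveI : (atTop : Filter ι).NeBot := atTop_neBot
  haveI hFne : F.NeBot := Filter.map_neBot
  -- Evaluation of σ-continuous functions at σ-cluster points along F.
  have eval : ∀ (z : X) (G : Filter X), G ≤ F → @ClusterPt X ndp.sigma z G →
      ∀ (f : X → ℝ) (c : ℝ), Continuous[ndp.sigma, inferInstance] f →
      Tendsto (fun α => f (AS.A α x)) atTop (nhds c) → f z = c := by
    intro z G hGF hz f c hf hfc
    haveI h0 : (@nhds X ndp.sigma z ⊓ G).NeBot := hz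
    haveI h1 : (Filter.map f (@nhds X ndp.sigma z ⊓ G)).NeBot := Filter.map_neBot
    have h2 : Filter.map f (@nhds X ndp.sigma z ⊓ G) ≤ nhds (f z) ⊓ nhds c := by
      refine le_inf ?_ ?_
      · refine (Filter.map_mono inf_le_left).trans ?_
        exact @Continuous.tendsto X ℝ ndp.sigma _ f hf z
      · refine (Filter.map_mono inf_le_right).trans ?_
        refine (Filter.map_mono hGF).trans ?_
        rw [hF, Filter.map_map]
        exact hfc
    have h3 : (nhds (f z) ⊓ nhds c).NeBot := h1.mono h2
    exact eq_of_nhds_neBot h3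
  -- Every σ-cluster point of a subfilter of F is a fixed point with prescribed pairings.
  have props : ∀ (z : X) (G : Filter X), G ≤ F → @ClusterPt X ndp.sigma z G →
      z ∈ fixedSpace AS.S ∧ ∀ y ∈ AS.fix', ndp.p z y = ndp.p x y := by
    intro z G hGF hz
    constructor
    · intro s hs
      have key : ∀ y' : Y, ndp.p (s z - z) y' = 0 := by
        intro y'
        have hf : Continuous[ndp.sigma, inferInstance]
            (fun w : X => ndp.p w (AS.adj s y') - ndp.p w y') :=
          @Continuous.sub ℝ X ndp.sigma _ _ _ _ _ (ndp.sigma_cont (AS.adj s y'))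
            (ndp.sigma_cont y')
        have hnet : Tendsto (fun α : ι =>
            ndp.p (AS.A α x) (AS.adj s y') - ndp.p (AS.A α x) y') atTop (nhds 0) := by
          have h0 := ndp.tendsto_pair_zero y' (AS.as3_right s hs x)
          refine h0.congr ?_
          intro α
          rw [map_sub, LinearMap.sub_apply, AS.adj_spec s hs]
        have := eval z G hGF hz _ 0 hf hnet
        have heq : ndp.p (s z - z) y' = ndp.p z (AS.adj s y') - ndp.p z y' := by
          rw [map_sub, LinearMap.sub_apply, AS.adj_spec s hs]
        rw [heq, this]
      have := ndp.eq_zero_of_pairings _ key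
      exact sub_eq_zero.mp this
    · intro y hy
      exact eval z G hGF hz (fun w => ndp.p w y) (ndp.p x y) (ndp.sigma_cont y)
        (tendsto_const_nhds.congr fun α => (AS.pair_const hy α x).symm)
  -- Uniqueness of σ-cluster points along subfilters of F.
  have uniq : ∀ (z₁ z₂ : X) (G₁ G₂ : Filter X), G₁ ≤ F → G₂ ≤ F →
      @ClusterPt X ndp.sigma z₁ G₁ → @ClusterPt X ndp.sigma z₂ G₂ → z₁ = z₂ := by
    intro z₁ z₂ G₁ G₂ h₁ h₂ hc₁ hc₂
    obtain ⟨hz₁fix, hz₁pair⟩ := props z₁ G₁ h₁ hc₁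
    obtain ⟨hz₂fix, hz₂pair⟩ := props z₂ G₂ h₂ hc₂
    by_contra hne
    have hdfix : z₁ - z₂ ∈ fixedSpace AS.S := by
      intro s hs
      rw [map_sub, hz₁fix s hs, hz₂fix s hs]
    obtain ⟨y, hy, hpy⟩ := hsep (z₁ - z₂) hdfix (sub_ne_zero.mpr hne)
    apply hpy
    rw [map_sub, LinearMap.sub_apply, hz₁pair y hy, hz₂pair y hy, sub_self]
  -- τ-cluster points are σ-cluster points.
  have tau_to_sigma : ∀ (z : X) (G : Filter X), @ClusterPt X τ z G →
      @ClusterPt X ndp.sigma z G := by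
    intro z G hz
    have hle : @nhds X τ z ⊓ G ≤ @nhds X ndp.sigma z ⊓ G :=
      inf_le_inf_right G (nhds_mono hτ)
    exact hz.neBot.mono hle
  -- Get a τ-cluster point of F itself.
  obtain ⟨z₀, hz₀⟩ := hcl F le_rfl hFne
  refine ⟨z₀, ?_⟩
  -- Show F τ-converges to z₀.
  by_contra hnot
  rw [Tendsto] at hnot
  have : ∃ s ∈ @nhds X τ z₀, s ∉ F := by
    by_contra hall
    push_neg at hall
    exact hnot fun s hs => hall s hs
  obtain ⟨s, hs, hsF⟩ := this
  set U : Set X := @interior X τ s with hU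
  have hUopen : @IsOpen X τ U := @isOpen_interior X τ s
  have hz₀U : z₀ ∈ U := @mem_interior_iff_mem_nhds X τ z₀ s |>.mpr hs
  have hUF : U ∉ F := fun h => hsF (Filter.mem_of_superset h (@interior_subset X τ s))
  have hGne : (F ⊓ Filter.principal Uᶜ).NeBot := by
    rw [Filter.neBot_iff]
    intro hbot
    apply hUF
    have := Filter.inf_principal_eq_bot.mp hbot
    simpa using this
  obtain ⟨z, hz⟩ := hcl (F ⊓ Filter.principal Uᶜ) inf_le_left hGne
  have hzz₀ : z = z₀ :=
    uniq z z₀ (F ⊓ Filter.principal Uᶜ) F inf_le_left le_rfl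
      (tau_to_sigma z _ hz) (tau_to_sigma z₀ F hz₀)
  -- z is a τ-cluster point of a filter ≤ 𝓟 Uᶜ, so z ∈ τ-closure Uᶜ = Uᶜ.
  have hzclU : @ClusterPt X τ z (Filter.principal Uᶜ) := by
    have hle : @nhds X τ z ⊓ (F ⊓ Filter.principal Uᶜ) ≤
        @nhds X τ z ⊓ Filter.principal Uᶜ :=
      inf_le_inf_left _ inf_le_right
    exact hz.neBot.mono hle
  have hzmem : z ∈ @closure X τ Uᶜ :=
    (@mem_closure_iff_clusterPt X τ z Uᶜ).mpr hzclU
  rw [(@IsClosed.closure_eq X τ Uᶜ (@IsOpen.isClosed_compl X τ U hUopen))] at hzmem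
  rw [hzz₀] at hzmem
  exact hzmem hz₀U
end
end

section
/- Let (S, A) be an average scheme on a norming dual pair (X,Y). If for every x ∈ X the net (A_α x) clusters in (X, σ(X,Y)) and for every y ∈ Y the net (A'_α y) clusters in (Y, σ(Y,X)), then the fixed spaces fix(S) and fix(S') separate each other. -/
open Filter Topology Set

noncomputable section

variable {X Y : Type*} [NormedAddCommGroup X] [NormedSpace ℝ X]
  [NormedAddCommGroup Y] [NormedSpace ℝ Y]

section Aux

variable (ndp : NormingDualPair X Y)

lemma aux_pair_abs_le (x : X) (y : Y) : |ndp.p x y| ≤ ‖x‖ * ‖y‖ := by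
  rcases eq_or_ne x 0 with rfl | hx
  · simp
  have hxn : (0:ℝ) < ‖x‖ := norm_pos_iff.mpr hx
  set u : X := ‖x‖⁻¹ • x with hu
  have hub : ‖u‖ ≤ 1 := by
    rw [hu, norm_smul, norm_inv, norm_norm, inv_mul_cancel₀ hxn.ne']
  by_cases hB : BddAbove (Set.range fun x' : {x' : X // ‖x'‖ ≤ 1} => |ndp.p x'.1 y|)
  · have h1 : |ndp.p u y| ≤ ‖y‖ := by
      rw [ndp.norm_eq_right y]
      exact le_ciSup hB ⟨u, hub⟩
    have hxu : x = ‖x‖ • u := by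
      rw [hu, smul_smul, mul_inv_cancel₀ hxn.ne', one_smul]
    calc |ndp.p x y| = |ndp.p (‖x‖ • u) y| := by rw [← hxu]
      _ = ‖x‖ * |ndp.p u y| := by
          rw [map_smul]
          simp [abs_mul, abs_of_nonneg (norm_nonneg x)]
      _ ≤ ‖x‖ * ‖y‖ := by
          exact mul_le_mul_of_nonneg_left h1 (norm_nonneg x)
  · have : ‖y‖ = 0 := by rw [ndp.norm_eq_right y]; exact Real.iSup_of_not_bddAbove hB
    have : y = 0 := norm_eq_zero.mp this
    simp [this]

lemma aux_y_eq_zero {y : Y} (h : ∀ x : X, ndp.p x y = 0) : y = 0 := by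
  haveI : Nonempty {x : X // ‖x‖ ≤ 1} := ⟨⟨0, by simp⟩⟩
  have : ‖y‖ = 0 := by
    rw [ndp.norm_eq_right y]
    simp only [h, abs_zero]
    exact ciSup_const
  exact norm_eq_zero.mp this

lemma aux_x_eq_zero {x : X} (h : ∀ y : Y, ndp.p x y = 0) : x = 0 := by
  haveI : Nonempty {y : Y // ‖y‖ ≤ 1} := ⟨⟨0, by simp⟩⟩
  have : ‖x‖ = 0 := by
    rw [ndp.norm_eq_left x]
    simp only [h, abs_zero]
    exact ciSup_const
  exact norm_eq_zero.mp this

/-- σ-continuity of pairing against a fixed `y`. -/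
lemma aux_cont_sigma (y : Y) :
    @Continuous X ℝ ndp.sigma _ (fun w => ndp.p w y) := by
  letI := ndp.sigma
  have h1 : Continuous (fun x : X => fun y : Y => ndp.p x y) := continuous_induced_dom
  exact (continuous_apply y).comp h1

/-- σ'-continuity of pairing against a fixed `x`. -/
lemma aux_cont_sigma' (x : X) :
    @Continuous Y ℝ ndp.sigma' _ (fun w => ndp.p x w) := by
  letI := ndp.sigma'
  have h1 : Continuous (fun y : Y => fun x : X => ndp.p x y) := continuous_induced_dom
  exact (continuous_apply x).comp h1

lemma aux_tendsto_pair_zero_right {ι' : Type*} {l : Filter ι'} (x : X) {w : ι' → Y}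
    (hw : Tendsto w l (𝓝 0)) : Tendsto (fun α => ndp.p x (w α)) l (𝓝 0) := by
  apply squeeze_zero_norm (a := fun α => ‖x‖ * ‖w α‖)
  · intro α
    simpa using aux_pair_abs_le ndp x (w α)
  · have : Tendsto (fun α => ‖w α‖) l (𝓝 0) := by
      simpa using hw.norm
    simpa using this.const_mul ‖x‖

lemma aux_tendsto_pair_zero_left {ι' : Type*} {l : Filter ι'} (y : Y) {w : ι' → X}
    (hw : Tendsto w l (𝓝 0)) : Tendsto (fun α => ndp.p (w α) y) l (𝓝 0) := by
  apply squeeze_zero_norm (a := fun α => ‖w α‖ * ‖y‖)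
  · intro α
    simpa using aux_pair_abs_le ndp (w α) y
  · have : Tendsto (fun α => ‖w α‖) l (𝓝 0) := by
      simpa using hw.norm
    simpa using this.mul_const ‖y‖

lemma aux_clusterPt_eq {c r : ℝ} {L : Filter ℝ} (h : ClusterPt r L) (hL : L ≤ 𝓝 c) :
    r = c :=
  eq_of_nhds_neBot (Filter.NeBot.mono h (inf_le_inf_left _ hL))

lemma aux_cluster_map {Z : Type*} (τ : TopologicalSpace Z) {z : Z} {F : Filter Z}
    (hz : @ClusterPt Z τ z F) {g : Z → ℝ} (hg : @Continuous Z ℝ τ _ g) :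
    ClusterPt (g z) (Filter.map g F) := by
  letI := τ
  exact hz.map hg.continuousAt le_rfl

variable {ι : Type*} [Preorder ι] (AS : AverageScheme ndp ι)

/-- If `x` is fixed, then `⟨A_α x, y⟩ = ⟨x, y⟩`. -/
lemma aux_fixed_pair_left {x : X} (hx : x ∈ fixedSpace AS.S) (α : ι) (y : Y) :
    ndp.p (AS.A α x) y = ndp.p x y := by
  have hset : {z | ∃ s ∈ AS.S, z = s x} = {x} := by
    ext z
    constructor
    · rintro ⟨s, hs, rfl⟩
      exact hx s hs
    · rintro (rfl : z = x)
      exact ⟨1, AS.one_mem, rfl⟩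
  have h2 := AS.as2 α x
  rw [hset, convexHull_singleton] at h2
  letI := ndp.sigma
  have := map_mem_closure (f := fun w => ndp.p w y) (t := {ndp.p x y})
    (aux_cont_sigma ndp y) h2 (by rintro w (rfl : w = x); rfl)
  simpa using this

/-- If `y` is fixed for the adjoint semigroup, then `⟨x, A'_α y⟩ = ⟨x, y⟩`. -/
lemma aux_fixed_pair_right {y : Y} (hy : y ∈ AS.fix') (α : ι) (x : X) :
    ndp.p x (AS.A' α y) = ndp.p x y := by
  have hset : {z | ∃ s ∈ AS.S, z = AS.adj s y} = {y} := by
    ext z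
    constructor
    · rintro ⟨s, hs, rfl⟩
      exact hy s hs
    · rintro (rfl : z = y)
      exact ⟨1, AS.one_mem, (hy 1 AS.one_mem).symm⟩
  have h2 := AS.as2' α y
  rw [hset, convexHull_singleton] at h2
  letI := ndp.sigma'
  have := map_mem_closure (f := fun w => ndp.p x w) (t := {ndp.p x y})
    (aux_cont_sigma' ndp x) h2 (by rintro w (rfl : w = y); rfl)
  simpa using this

end Aux

theorem stmt7 {ι : Type*} [Preorder ι] [Nonempty ι] [IsDirected ι (· ≤ ·)]
    (ndp : NormingDualPair X Y) (AS : AverageScheme ndp ι)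
    (hX : ∀ x : X, ClustersIn ndp.sigma (Filter.map (fun α : ι => AS.A α x) atTop))
    (hY : ∀ y : Y, ClustersIn ndp.sigma' (Filter.map (fun α : ι => AS.A' α y) atTop)) :
    (∀ x ∈ fixedSpace AS.S, x ≠ 0 → ∃ y ∈ AS.fix', ndp.p x y ≠ 0) ∧
    (∀ y ∈ AS.fix', y ≠ 0 → ∃ x ∈ fixedSpace AS.S, ndp.p x y ≠ 0) := by
  have hAtTop : (atTop : Filter ι).NeBot :=
    atTop_neBot_iff.mpr ⟨inferInstance, inferInstance⟩
  constructor
  · -- from fix(S) to fix(S')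
    intro x hx hx0
    -- choose y₀ with ⟨x, y₀⟩ ≠ 0
    obtain ⟨y₀, hy₀⟩ : ∃ y₀ : Y, ndp.p x y₀ ≠ 0 := by
      by_contra h
      push_neg at h
      exact hx0 (aux_x_eq_zero ndp h)
    set F : Filter Y := Filter.map (fun α : ι => AS.A' α y₀) atTop with hF
    have hFne : F.NeBot := hAtTop.map _
    obtain ⟨z, hz⟩ := hY y₀ F le_rfl hFne
    -- ⟨x, A'_α y₀⟩ = ⟨A_α x, y₀⟩ = ⟨x, y₀⟩
    have hconst : ∀ α : ι, ndp.p x (AS.A' α y₀) = ndp.p x y₀ := fun α => by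
      rw [← AS.A'_spec α x y₀, aux_fixed_pair_left ndp AS hx α y₀]
    -- pairing against x is constant along the net, so ⟨x, z⟩ = ⟨x, y₀⟩
    have hxz : ndp.p x z = ndp.p x y₀ := by
      have hcl : ClusterPt (ndp.p x z) (Filter.map (fun w => ndp.p x w) F) :=
        aux_cluster_map ndp.sigma' hz (aux_cont_sigma' ndp x)
      refine aux_clusterPt_eq hcl ?_
      rw [hF, Filter.map_map]
      have : (fun α : ι => ndp.p x (AS.A' α y₀)) = fun _ : ι => ndp.p x y₀ :=
        funext hconst
      rw [Function.comp_def]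
      simp only [hconst]
      exact tendsto_const_nhds
    refine ⟨z, ?_, by rw [hxz]; exact hy₀⟩
    -- z is a fixed point of the adjoint semigroup
    intro s hs
    have key : ∀ x' : X, ndp.p x' (AS.adj s z - z) = 0 := by
      intro x'
      have hfc : @Continuous Y ℝ ndp.sigma' _
          (fun w => ndp.p (s x') w - ndp.p x' w) := by
        letI := ndp.sigma'
        exact (aux_cont_sigma' ndp (s x')).sub (aux_cont_sigma' ndp x')
      have hcl : ClusterPt (ndp.p (s x') z - ndp.p x' z)
          (Filter.map (fun w => ndp.p (s x') w - ndp.p x' w) F) :=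
        aux_cluster_map ndp.sigma' hz hfc
      have hzero : ndp.p (s x') z - ndp.p x' z = 0 := by
        refine aux_clusterPt_eq hcl ?_
        rw [hF, Filter.map_map]
        have heq : ∀ α : ι, ((fun w => ndp.p (s x') w - ndp.p x' w) ∘
            fun α : ι => AS.A' α y₀) α
            = ndp.p x' (AS.adj s (AS.A' α y₀) - AS.A' α y₀) := by
          intro α
          simp only [Function.comp_apply, map_sub]
          rw [AS.adj_spec s hs x' (AS.A' α y₀)]
        rw [funext heq]
        exact aux_tendsto_pair_zero_right ndp x' (AS.as3'_right s hs y₀)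
      rw [map_sub, ← AS.adj_spec s hs x' z]
      exact hzero
    exact sub_eq_zero.mp (aux_y_eq_zero ndp key)
  · -- from fix(S') to fix(S)
    intro y hy hy0
    obtain ⟨x₀, hx₀⟩ : ∃ x₀ : X, ndp.p x₀ y ≠ 0 := by
      by_contra h
      push_neg at h
      exact hy0 (aux_y_eq_zero ndp h)
    set F : Filter X := Filter.map (fun α : ι => AS.A α x₀) atTop with hF
    have hFne : F.NeBot := hAtTop.map _
    obtain ⟨z, hz⟩ := hX x₀ F le_rfl hFne
    have hconst : ∀ α : ι, ndp.p (AS.A α x₀) y = ndp.p x₀ y := fun α => by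
      rw [AS.A'_spec α x₀ y, aux_fixed_pair_right ndp AS hy α x₀]
    have hzy : ndp.p z y = ndp.p x₀ y := by
      have hcl : ClusterPt (ndp.p z y) (Filter.map (fun w => ndp.p w y) F) :=
        aux_cluster_map ndp.sigma hz (aux_cont_sigma ndp y)
      refine aux_clusterPt_eq hcl ?_
      rw [hF, Filter.map_map]
      rw [Function.comp_def]
      simp only [hconst]
      exact tendsto_const_nhds
    refine ⟨z, ?_, by rw [hzy]; exact hx₀⟩
    intro s hs
    have key : ∀ y' : Y, ndp.p (s z - z) y' = 0 := by
      intro y'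
      have hfc : @Continuous X ℝ ndp.sigma _
          (fun w => ndp.p w (AS.adj s y') - ndp.p w y') := by
        letI := ndp.sigma
        exact (aux_cont_sigma ndp (AS.adj s y')).sub (aux_cont_sigma ndp y')
      have hcl : ClusterPt (ndp.p z (AS.adj s y') - ndp.p z y')
          (Filter.map (fun w => ndp.p w (AS.adj s y') - ndp.p w y') F) :=
        aux_cluster_map ndp.sigma hz hfc
      have hzero : ndp.p z (AS.adj s y') - ndp.p z y' = 0 := by
        refine aux_clusterPt_eq hcl ?_
        rw [hF, Filter.map_map]
        have heq : ∀ α : ι, ((fun w => ndp.p w (AS.adj s y') - ndp.p w y') ∘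
            fun α : ι => AS.A α x₀) α
            = ndp.p (s (AS.A α x₀) - AS.A α x₀) y' := by
          intro α
          simp only [Function.comp_apply, map_sub, LinearMap.sub_apply]
          rw [← AS.adj_spec s hs (AS.A α x₀) y']
        rw [funext heq]
        exact aux_tendsto_pair_zero_left ndp y' (AS.as3_right s hs x₀)
      have := hzero
      rw [← AS.adj_spec s hs z y'] at this
      calc ndp.p (s z - z) y' = ndp.p (s z) y' - ndp.p z y' := by
            simp [map_sub, LinearMap.sub_apply]
        _ = 0 := this
    exact sub_eq_zero.mp (aux_x_eq_zero ndp key)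
end
end

section
/- Let (S, A) be a weakly ergodic average scheme on a norming dual pair (X,Y). Then the operator P defined by Px := σ-lim_α A_α x belongs to L(X,σ) (it is bounded and its norm adjoint leaves Y invariant), its σ-adjoint P' satisfies P'y = σ'-lim_α A'_α y for all y ∈ Y, P is the projection onto fix(S) along span‾^σ rg(I−S), P' is the projection onto fix(S') along span‾^{σ'} rg(I−S'), and PS = SP = P for all S ∈ S. -/
open Filter Topology Set

noncomputable section

variable {X Y : Type*} [NormedAddCommGroup X] [NormedSpace ℝ X]
  [NormedAddCommGroup Y] [NormedSpace ℝ Y]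

namespace NormingDualPair
variable (ndp : NormingDualPair X Y)

lemma pairing_abs_le_left (x : X) {y : Y} (hy : ‖y‖ ≤ 1) : |ndp.p x y| ≤ ‖x‖ := by
  by_cases hb : BddAbove (Set.range fun y : {y : Y // ‖y‖ ≤ 1} => |ndp.p x y.1|)
  · rw [ndp.norm_eq_left x]
    exact le_ciSup hb ⟨y, hy⟩
  · have hx : ‖x‖ = 0 := by rw [ndp.norm_eq_left x, Real.iSup_of_not_bddAbove hb]
    rw [norm_eq_zero.mp hx]
    simp

lemma pairing_abs_le (x : X) (y : Y) : |ndp.p x y| ≤ ‖x‖ * ‖y‖ := by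
  rcases eq_or_ne y 0 with rfl | hy
  · simp
  · have h1 : ‖(‖y‖⁻¹ : ℝ) • y‖ ≤ 1 := by
      rw [norm_smul, norm_inv, norm_norm, inv_mul_cancel₀ (norm_ne_zero_iff.mpr hy)]
    have h2 := ndp.pairing_abs_le_left x h1
    rw [map_smul, smul_eq_mul, abs_mul, abs_of_nonneg (inv_nonneg.mpr (norm_nonneg y))] at h2
    calc |ndp.p x y| = ‖y‖ * (‖y‖⁻¹ * |ndp.p x y|) :=
          (mul_inv_cancel_left₀ (norm_ne_zero_iff.mpr hy) _).symm
      _ ≤ ‖y‖ * ‖x‖ := mul_le_mul_of_nonneg_left h2 (norm_nonneg y)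
      _ = ‖x‖ * ‖y‖ := mul_comm _ _

lemma eq_of_pairing_left {x₁ x₂ : X} (h : ∀ y, ndp.p x₁ y = ndp.p x₂ y) : x₁ = x₂ := by
  haveI : Nonempty {y : Y // ‖y‖ ≤ 1} := ⟨⟨0, by simp⟩⟩
  have hz : ∀ y : {y : Y // ‖y‖ ≤ 1}, |ndp.p (x₁ - x₂) y.1| = 0 := by
    intro y; simp [h y.1]
  have : ‖x₁ - x₂‖ = 0 := by
    rw [ndp.norm_eq_left]
    simp only [hz, ciSup_const]
  exact sub_eq_zero.mp (norm_eq_zero.mp this)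

lemma eq_of_pairing_right {y₁ y₂ : Y} (h : ∀ x, ndp.p x y₁ = ndp.p x y₂) : y₁ = y₂ := by
  haveI : Nonempty {x : X // ‖x‖ ≤ 1} := ⟨⟨0, by simp⟩⟩
  have hz : ∀ x : {x : X // ‖x‖ ≤ 1}, |ndp.p x.1 (y₁ - y₂)| = 0 := by
    intro x; simp [h x.1]
  have : ‖y₁ - y₂‖ = 0 := by
    rw [ndp.norm_eq_right]
    simp only [hz, ciSup_const]
  exact sub_eq_zero.mp (norm_eq_zero.mp this)

lemma tendsto_sigma_iff {κ : Type*} {F : Filter κ} (f : κ → X) (l : X) :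
    Tendsto f F (@nhds X ndp.sigma l) ↔
      ∀ y, Tendsto (fun a => ndp.p (f a) y) F (nhds (ndp.p l y)) := by
  rw [NormingDualPair.sigma, nhds_induced, tendsto_comap_iff, tendsto_pi_nhds]
  exact Iff.rfl

lemma tendsto_sigma'_iff {κ : Type*} {F : Filter κ} (f : κ → Y) (l : Y) :
    Tendsto f F (@nhds Y ndp.sigma' l) ↔
      ∀ x, Tendsto (fun a => ndp.p x (f a)) F (nhds (ndp.p x l)) := by
  rw [NormingDualPair.sigma', nhds_induced, tendsto_comap_iff, tendsto_pi_nhds]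
  exact Iff.rfl

lemma isClosed_pairing_eq (w : Y) (c : ℝ) : @IsClosed X ndp.sigma {x | ndp.p x w = c} := by
  letI := ndp.sigma
  have h1 : Continuous fun x : X => (fun y : Y => ndp.p x y) := continuous_induced_dom
  exact isClosed_eq ((continuous_apply w).comp h1) continuous_const

lemma isClosed_pairing_eq' (w : X) (c : ℝ) : @IsClosed Y ndp.sigma' {y | ndp.p w y = c} := by
  letI := ndp.sigma'
  have h1 : Continuous fun y : Y => (fun x : X => ndp.p x y) := continuous_induced_dom
  exact isClosed_eq ((continuous_apply w).comp h1) continuous_const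

lemma closure_singleton_sigma {x z : X} (hz : z ∈ @closure X ndp.sigma {x}) : z = x := by
  apply ndp.eq_of_pairing_left
  intro y
  letI := ndp.sigma
  exact closure_minimal (by rintro u rfl; rfl) (ndp.isClosed_pairing_eq y (ndp.p x y)) hz

lemma closure_singleton_sigma' {y z : Y} (hz : z ∈ @closure Y ndp.sigma' {y}) : z = y := by
  apply ndp.eq_of_pairing_right
  intro x
  letI := ndp.sigma'
  exact closure_minimal (by rintro u rfl; rfl) (ndp.isClosed_pairing_eq' x (ndp.p x y)) hz

end NormingDualPair

theorem stmt10 {ι : Type*} [Preorder ι] [Nonempty ι] [IsDirected ι (· ≤ ·)]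
    (ndp : NormingDualPair X Y) (AS : AverageScheme ndp ι)
    (h : AS.WeaklyErgodic) :
    ∃ (P : X →L[ℝ] X) (P' : Y →L[ℝ] Y),
      (∀ x : X, Tendsto (fun α : ι => AS.A α x) atTop (@nhds X ndp.sigma (P x))) ∧
      (∀ y : Y, Tendsto (fun α : ι => AS.A' α y) atTop (@nhds Y ndp.sigma' (P' y))) ∧
      (∀ (x : X) (y : Y), ndp.p (P x) y = ndp.p x (P' y)) ∧
      (∀ x : X, P x ∈ fixedSpace AS.S) ∧
      (∀ x ∈ fixedSpace AS.S, P x = x) ∧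
      (∀ x ∈ @closure X ndp.sigma (Submodule.span ℝ (rangeIminus AS.S) : Set X), P x = 0) ∧
      (∀ y : Y, P' y ∈ AS.fix') ∧
      (∀ y ∈ AS.fix', P' y = y) ∧
      (∀ y ∈ @closure Y ndp.sigma' (Submodule.span ℝ AS.rg' : Set Y), P' y = 0) ∧
      (∀ s ∈ AS.S, ∀ x : X, P (s x) = P x ∧ s (P x) = P x) := by
  obtain ⟨M0, hM0⟩ := AS.normBound
  set M := max M0 0 with hMdef
  have hMnn : (0:ℝ) ≤ M := le_max_right _ _
  have hMA : ∀ α, ‖AS.A α‖ ≤ M := fun α => (hM0 α).trans (le_max_left _ _)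
  let Px : X → X := fun x => (h.1 x).choose
  let Qy : Y → Y := fun y => (h.2 y).choose
  have hPx : ∀ x, Tendsto (fun α => AS.A α x) atTop (@nhds X ndp.sigma (Px x)) :=
    fun x => (h.1 x).choose_spec
  have hQy : ∀ y, Tendsto (fun α => AS.A' α y) atTop (@nhds Y ndp.sigma' (Qy y)) :=
    fun y => (h.2 y).choose_spec
  have hconv : ∀ x y, Tendsto (fun α => ndp.p (AS.A α x) y) atTop (nhds (ndp.p (Px x) y)) :=
    fun x => (ndp.tendsto_sigma_iff _ _).mp (hPx x)
  have hconv' : ∀ y x, Tendsto (fun α => ndp.p x (AS.A' α y)) atTop (nhds (ndp.p x (Qy y))) :=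
    fun y => (ndp.tendsto_sigma'_iff _ _).mp (hQy y)
  have hdual : ∀ x y, ndp.p (Px x) y = ndp.p x (Qy y) := by
    intro x y
    refine tendsto_nhds_unique (hconv x y) ?_
    exact (hconv' y x).congr fun α => (AS.A'_spec α x y).symm
  -- linearity of Px
  have hadd : ∀ x z, Px (x + z) = Px x + Px z := by
    intro x z
    apply ndp.eq_of_pairing_left; intro y
    have h1 : Tendsto (fun α => ndp.p (AS.A α (x + z)) y) atTop
        (nhds (ndp.p (Px x) y + ndp.p (Px z) y)) := by
      refine ((hconv x y).add (hconv z y)).congr fun α => ?_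
      simp [map_add]
    rw [tendsto_nhds_unique (hconv (x + z) y) h1]
    simp [map_add]
  have hsmul : ∀ (c : ℝ) (x : X), Px (c • x) = c • Px x := by
    intro c x
    apply ndp.eq_of_pairing_left; intro y
    have h1 : Tendsto (fun α => ndp.p (AS.A α (c • x)) y) atTop
        (nhds (c * ndp.p (Px x) y)) := by
      refine ((hconv x y).const_mul c).congr fun α => ?_
      simp [map_smul]
    rw [tendsto_nhds_unique (hconv (c • x) y) h1]
    simp [map_smul]
  have habs : ∀ x y, |ndp.p (Px x) y| ≤ M * ‖x‖ * ‖y‖ := by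
    intro x y
    refine le_of_tendsto (hconv x y).abs (Eventually.of_forall fun α => ?_)
    calc |ndp.p (AS.A α x) y| ≤ ‖AS.A α x‖ * ‖y‖ := ndp.pairing_abs_le _ _
      _ ≤ M * ‖x‖ * ‖y‖ := by
          refine mul_le_mul_of_nonneg_right ?_ (norm_nonneg y)
          exact ((AS.A α).le_opNorm x).trans
            (mul_le_mul_of_nonneg_right (hMA α) (norm_nonneg x))
  have hnormP : ∀ x, ‖Px x‖ ≤ M * ‖x‖ := by
    intro x
    haveI : Nonempty {y : Y // ‖y‖ ≤ 1} := ⟨⟨0, by simp⟩⟩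
    rw [ndp.norm_eq_left]
    refine ciSup_le fun y => ?_
    calc |ndp.p (Px x) y.1| ≤ M * ‖x‖ * ‖y.1‖ := habs x y.1
      _ ≤ M * ‖x‖ * 1 := mul_le_mul_of_nonneg_left y.2 (by positivity)
      _ = M * ‖x‖ := mul_one _
  -- linearity of Qy
  have hadd' : ∀ y z, Qy (y + z) = Qy y + Qy z := by
    intro y z
    apply ndp.eq_of_pairing_right; intro x
    have h1 : Tendsto (fun α => ndp.p x (AS.A' α (y + z))) atTop
        (nhds (ndp.p x (Qy y) + ndp.p x (Qy z))) := by
      refine ((hconv' y x).add (hconv' z x)).congr fun α => ?_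
      simp [map_add]
    rw [tendsto_nhds_unique (hconv' (y + z) x) h1]
    simp [map_add]
  have hsmul' : ∀ (c : ℝ) (y : Y), Qy (c • y) = c • Qy y := by
    intro c y
    apply ndp.eq_of_pairing_right; intro x
    have h1 : Tendsto (fun α => ndp.p x (AS.A' α (c • y))) atTop
        (nhds (c * ndp.p x (Qy y))) := by
      refine ((hconv' y x).const_mul c).congr fun α => ?_
      simp [map_smul]
    rw [tendsto_nhds_unique (hconv' (c • y) x) h1]
    simp [map_smul]
  have hnormQ : ∀ y, ‖Qy y‖ ≤ M * ‖y‖ := by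
    intro y
    haveI : Nonempty {x : X // ‖x‖ ≤ 1} := ⟨⟨0, by simp⟩⟩
    rw [ndp.norm_eq_right]
    refine ciSup_le fun x => ?_
    calc |ndp.p x.1 (Qy y)| = |ndp.p (Px x.1) y| := by rw [hdual]
      _ ≤ M * ‖x.1‖ * ‖y‖ := habs x.1 y
      _ ≤ M * 1 * ‖y‖ := by
          refine mul_le_mul_of_nonneg_right ?_ (norm_nonneg y)
          exact mul_le_mul_of_nonneg_left x.2 hMnn
      _ = M * ‖y‖ := by rw [mul_one]
  -- fixed space properties
  have hfixP : ∀ s ∈ AS.S, ∀ x : X, s (Px x) = Px x := by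
    intro s hs x
    apply ndp.eq_of_pairing_left; intro y
    rw [AS.adj_spec s hs]
    refine tendsto_nhds_unique (hconv x (AS.adj s y)) ?_
    have hd : Tendsto (fun α => ndp.p (s (AS.A α x) - AS.A α x) y) atTop (nhds 0) := by
      have hg : Tendsto (fun α => ‖s (AS.A α x) - AS.A α x‖ * ‖y‖) atTop (nhds 0) := by
        have := ((AS.as3_right s hs x).norm).mul_const ‖y‖
        simpa using this
      refine squeeze_zero_norm (fun α => ?_) hg
      exact ndp.pairing_abs_le _ y
    have h2 : Tendsto
        (fun α => ndp.p (AS.A α x) y + ndp.p (s (AS.A α x) - AS.A α x) y) atTop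
        (nhds (ndp.p (Px x) y)) := by
      simpa using (hconv x y).add hd
    refine h2.congr fun α => ?_
    rw [← AS.adj_spec s hs (AS.A α x) y]
    simp only [map_sub, LinearMap.sub_apply]
    ring
  have hfixQ : ∀ s ∈ AS.S, ∀ y : Y, AS.adj s (Qy y) = Qy y := by
    intro s hs y
    apply ndp.eq_of_pairing_right; intro x
    rw [← AS.adj_spec s hs x]
    refine tendsto_nhds_unique (hconv' y (s x)) ?_
    have hd : Tendsto (fun α => ndp.p x (AS.adj s (AS.A' α y) - AS.A' α y)) atTop (nhds 0) := by
      have hg : Tendsto (fun α => ‖x‖ * ‖AS.adj s (AS.A' α y) - AS.A' α y‖) atTop (nhds 0) := by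
        have := ((AS.as3'_right s hs y).norm).const_mul ‖x‖
        simpa using this
      refine squeeze_zero_norm (fun α => ?_) hg
      exact ndp.pairing_abs_le x _
    have h2 : Tendsto
        (fun α => ndp.p x (AS.A' α y) + ndp.p x (AS.adj s (AS.A' α y) - AS.A' α y)) atTop
        (nhds (ndp.p x (Qy y))) := by
      simpa using (hconv' y x).add hd
    refine h2.congr fun α => ?_
    rw [AS.adj_spec s hs x (AS.A' α y)]
    simp only [map_sub]
    ring
  -- identity on fixed spaces
  have hPid : ∀ x ∈ fixedSpace AS.S, Px x = x := by
    intro x hx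
    have hset : {z | ∃ s ∈ AS.S, z = s x} = {x} := by
      ext z; constructor
      · rintro ⟨s, hs, rfl⟩; simp [hx s hs]
      · rintro rfl; exact ⟨1, AS.one_mem, (ContinuousLinearMap.one_apply _).symm⟩
    have hAx : ∀ α, AS.A α x = x := by
      intro α
      have h2 := AS.as2 α x
      rw [hset, convexHull_singleton] at h2
      exact ndp.closure_singleton_sigma h2
    apply ndp.eq_of_pairing_left; intro y
    refine tendsto_nhds_unique (hconv x y) ?_
    simp only [hAx]
    exact tendsto_const_nhds
  have hQid : ∀ y ∈ AS.fix', Qy y = y := by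
    intro y hy
    have hset : {z | ∃ s ∈ AS.S, z = AS.adj s y} = {y} := by
      ext z; constructor
      · rintro ⟨s, hs, rfl⟩; simp [hy s hs]
      · rintro rfl; exact ⟨1, AS.one_mem, (hy 1 AS.one_mem).symm⟩
    have hAy : ∀ α, AS.A' α y = y := by
      intro α
      have h2 := AS.as2' α y
      rw [hset, convexHull_singleton] at h2
      exact ndp.closure_singleton_sigma' h2
    apply ndp.eq_of_pairing_right; intro x
    refine tendsto_nhds_unique (hconv' y x) ?_
    simp only [hAy]
    exact tendsto_const_nhds
  -- vanishing on closures of ranges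
  have hPzero : ∀ x ∈ @closure X ndp.sigma
      (Submodule.span ℝ (rangeIminus AS.S) : Set X), Px x = 0 := by
    intro x hx
    apply ndp.eq_of_pairing_left; intro y
    have hker : (Submodule.span ℝ (rangeIminus AS.S) : Set X) ⊆
        {u | ndp.p u (Qy y) = 0} := by
      intro u hu
      have hsp : Submodule.span ℝ (rangeIminus AS.S) ≤
          LinearMap.ker (ndp.p.flip (Qy y)) := by
        rw [Submodule.span_le]
        rintro z ⟨v, s, hs, rfl⟩
        simp only [SetLike.mem_coe, LinearMap.mem_ker, LinearMap.flip_apply]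
        rw [map_sub, LinearMap.sub_apply, AS.adj_spec s hs, hfixQ s hs y, sub_self]
      simpa using hsp hu
    have h0 : ndp.p x (Qy y) = 0 := by
      letI := ndp.sigma
      exact closure_minimal hker (ndp.isClosed_pairing_eq (Qy y) 0) hx
    rw [hdual x y, h0]
    simp
  have hQzero : ∀ y ∈ @closure Y ndp.sigma' (Submodule.span ℝ AS.rg' : Set Y), Qy y = 0 := by
    intro y hy
    apply ndp.eq_of_pairing_right; intro x
    have hker : (Submodule.span ℝ AS.rg' : Set Y) ⊆ {v | ndp.p (Px x) v = 0} := by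
      intro v hv
      have hsp : Submodule.span ℝ AS.rg' ≤ LinearMap.ker (ndp.p (Px x)) := by
        rw [Submodule.span_le]
        rintro z ⟨w, s, hs, rfl⟩
        simp only [SetLike.mem_coe, LinearMap.mem_ker]
        rw [map_sub, ← AS.adj_spec s hs, hfixP s hs x, sub_self]
      simpa using hsp hv
    have h0 : ndp.p (Px x) y = 0 := by
      letI := ndp.sigma'
      exact closure_minimal hker (ndp.isClosed_pairing_eq' (Px x) 0) hy
    rw [← hdual x y, h0]
    simp
  have hPs : ∀ s ∈ AS.S, ∀ x : X, Px (s x) = Px x := by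
    intro s hs x
    apply ndp.eq_of_pairing_left; intro y
    rw [hdual, hdual, AS.adj_spec s hs, hfixQ s hs y]
  -- package into continuous linear maps
  let P : X →L[ℝ] X :=
    LinearMap.mkContinuous ⟨⟨Px, hadd⟩, hsmul⟩ M hnormP
  let Q : Y →L[ℝ] Y :=
    LinearMap.mkContinuous ⟨⟨Qy, hadd'⟩, hsmul'⟩ M hnormQ
  exact ⟨P, Q, hPx, hQy, hdual, fun x s hs => hfixP s hs x, hPid, hPzero,
    fun y s hs => hfixQ s hs y, hQid, hQzero,
    fun s hs x => ⟨hPs s hs x, hfixP s hs x⟩⟩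
end
end

section
/- Let (S, A) be an average scheme on a norming dual pair (X,Y) such that fix(S) and fix(S') separate each other and fix(S) is finite dimensional. Then X = fix(S) ⊕ span‾^σ rg(I−S) and Y = fix(S') ⊕ span‾^{σ'} rg(I−S'). -/
open Filter Topology Set

noncomputable section

variable {X Y : Type*} [NormedAddCommGroup X] [NormedSpace ℝ X]
  [NormedAddCommGroup Y] [NormedSpace ℝ Y]

section AuxWeak

variable {E G : Type*} [AddCommGroup E] [Module ℝ E] [AddCommGroup G] [Module ℝ G]


private lemma weak_dual_char (B : E →ₗ[ℝ] G →ₗ[ℝ] ℝ) (f : WeakBilin B →L[ℝ] ℝ) :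
    ∃ y : G, ∀ x : E, f x = B x y := by
  have h0 : f ⁻¹' (Set.Ioo (-1 : ℝ) 1) ∈ nhds (0 : WeakBilin B) := by
    have := f.continuous.continuousAt (x := (0 : WeakBilin B))
    apply this.preimage_mem_nhds
    rw [map_zero]
    exact Ioo_mem_nhds (by norm_num) (by norm_num)
  replace h0 : (f ⁻¹' (Set.Ioo (-1 : ℝ) 1) : Set E) ∈
      Filter.comap (fun (x : E) (y : G) => B x y) (nhds (fun y => B (0 : E) y)) := by
    rw [← nhds_induced (fun (x : E) (y : G) => B x y) (0 : E)]; exact h0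
  rw [Filter.mem_comap] at h0
  obtain ⟨U, hU, hUsub⟩ := h0
  rw [show (fun (y : G) => B (0 : E) y) = (0 : G → ℝ) by ext y; simp, nhds_pi,
    Filter.mem_pi] at hU
  obtain ⟨I, hIfin, V, hV, hVU⟩ := hU
  haveI : Finite I := hIfin.to_subtype
  have hker : ⨅ i : I, LinearMap.ker (B.flip i.1) ≤ LinearMap.ker (f.toLinearMap : E →ₗ[ℝ] ℝ) := by
    intro x hx
    simp only [Submodule.mem_iInf, LinearMap.mem_ker, LinearMap.flip_apply] at hx
    have key : ∀ t : ℝ, f (t • x) ∈ Set.Ioo (-1 : ℝ) 1 := by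
      intro t
      apply hUsub
      apply hVU
      intro i hi
      have : B (t • x) i = 0 := by
        rw [map_smul]
        simp [hx ⟨i, hi⟩]
      simp only [Set.mem_pi] at *
      rw [this]
      exact mem_of_mem_nhds (hV i)
    change (f : WeakBilin B → ℝ) x = 0
    by_contra hfx
    have := key ((2 : ℝ) / f x)
    rw [show f ((2 / f x) • x) = 2 / f x * f x from f.map_smul (2 / f x) (x : WeakBilin B),
      div_mul_cancel₀ _ (by exact_mod_cast hfx)] at this
    exact absurd this.2 (by norm_num)
  have hspan := mem_span_of_iInf_ker_le_ker (𝕜 := ℝ) hker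
  haveI : Fintype I := hIfin.fintype
  obtain ⟨c, hc⟩ := (Submodule.mem_span_range_iff_exists_fun ℝ).1 hspan
  refine ⟨∑ i : I, c i • (i : G), fun x => ?_⟩
  have := congrFun (congrArg (fun (g : E →ₗ[ℝ] ℝ) => (g : E → ℝ)) hc) x
  simp only [LinearMap.coe_sum, Finset.sum_apply, LinearMap.smul_apply,
    LinearMap.flip_apply, smul_eq_mul] at this
  rw [map_sum]
  simp only [map_smul, smul_eq_mul]
  exact this.symm

private lemma exists_functional (B : E →ₗ[ℝ] G →ₗ[ℝ] ℝ) (D : Submodule ℝ (WeakBilin B))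
    (x : WeakBilin B) (hx : x ∉ D.topologicalClosure) :
    ∃ y : G, (∀ d ∈ D, B d y = 0) ∧ B x y ≠ 0 := by
  obtain ⟨f, u, hfd, hfx⟩ := geometric_hahn_banach_closed_point
    (D.topologicalClosure.convex) (D.isClosed_topologicalClosure) hx
  have hvan : ∀ d ∈ D.topologicalClosure, f d = 0 := by
    intro d hd
    by_contra hc
    have := hfd (((|u| + 1) / f d) • d) (D.topologicalClosure.smul_mem _ hd)
    rw [map_smul, smul_eq_mul, div_mul_cancel₀ _ hc] at this
    have : |u| + 1 < u := this
    have := abs_nonneg u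
    have := le_abs_self u
    linarith
  have hu : 0 < u := by
    have := hfd 0 (Submodule.zero_mem _)
    rwa [map_zero] at this
  obtain ⟨y, hy⟩ := weak_dual_char B f
  refine ⟨y, fun d hd => ?_, ?_⟩
  · rw [← hy d]
    exact hvan d (D.le_topologicalClosure hd)
  · rw [← hy x]
    intro h
    rw [h] at hfx
    linarith

set_option maxHeartbeats 1000000 in
set_option synthInstance.maxHeartbeats 200000 in
private theorem core (B : E →ₗ[ℝ] G →ₗ[ℝ] ℝ) (F : Submodule ℝ (WeakBilin B))
    (hFD : FiniteDimensional ℝ F)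
    (G' : Submodule ℝ G) (R : Set (WeakBilin B))
    (h1 : ∀ y : G, (∀ z ∈ R, B z y = 0) → (∀ x ∈ F, B x y = 0) → y = 0)
    (h2 : ∀ y ∈ G', ∀ z ∈ R, B z y = 0)
    (h3 : ∀ x ∈ F, (∀ y ∈ G', B x y = 0) → x = 0) :
    (∀ x : WeakBilin B, ∃ a ∈ F, ∃ b ∈ closure ((Submodule.span ℝ R : Submodule ℝ (WeakBilin B)) :
        Set (WeakBilin B)), x = a + b) ∧
    (F : Set (WeakBilin B)) ∩
      closure ((Submodule.span ℝ R : Submodule ℝ (WeakBilin B)) : Set (WeakBilin B)) ⊆ {0} := by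
  have hkill : ∀ y ∈ G', ∀ z ∈ closure ((Submodule.span ℝ R : Submodule ℝ (WeakBilin B)) :
      Set (WeakBilin B)), B z y = 0 := by
    intro y hy z hz
    have hcl : closure ((Submodule.span ℝ R : Submodule ℝ (WeakBilin B)) : Set (WeakBilin B)) ⊆
        {w : WeakBilin B | B w y = 0} := by
      apply closure_minimal
      · intro w hw
        induction hw using Submodule.span_induction with
        | mem r hr => exact h2 y hy r hr
        | zero => exact LinearMap.map_zero₂ B y
        | add a b _ _ ha hb =>
            have : B (a + b) y = B a y + B b y := LinearMap.map_add₂ B a b y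
            simp only [Set.mem_setOf_eq] at *
            rw [this, ha, hb, add_zero]
        | smul c a _ ha =>
            have : B (c • a) y = c • B a y := LinearMap.map_smul₂ B c a y
            simp only [Set.mem_setOf_eq] at *
            rw [this, ha, smul_zero]
      · exact isClosed_eq (WeakBilin.eval_continuous B y) continuous_const
    exact hcl hz
  constructor
  · -- decomposition
    set n := Module.finrank ℝ F with hn
    let bF : Module.Basis (Fin n) ℝ F := Module.finBasis ℝ F
    let Ψ : G →ₗ[ℝ] Module.Dual ℝ F := F.subtype.dualMap.comp B.flip
    have hΨ : ∀ (y : G) (v : F), Ψ y v = B (v : WeakBilin B) y := fun y v => rfl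
    set W : Submodule ℝ (Module.Dual ℝ F) := G'.map Ψ with hW
    have hWco : W.dualCoannihilator = ⊥ := by
      rw [eq_bot_iff]
      intro v hv
      rw [Submodule.mem_dualCoannihilator] at hv
      rw [Submodule.mem_bot]
      have : (v : WeakBilin B) = 0 := by
        apply h3 v.1 v.2
        intro y hy
        have := hv (Ψ y) (Submodule.mem_map_of_mem hy)
        rwa [hΨ] at this
      exact Subtype.ext this
    haveI : FiniteDimensional ℝ (Module.Dual ℝ F) := inferInstance
    haveI : FiniteDimensional ℝ W := FiniteDimensional.finiteDimensional_submodule W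
    have hWtop : W = ⊤ := by
      have := Subspace.dualCoannihilator_dualAnnihilator_eq (W := W)
      rw [hWco, Submodule.dualAnnihilator_bot] at this
      exact this.symm
    have hex : ∀ j : Fin n, ∃ y ∈ G', Ψ y = bF.coord j := by
      intro j
      have : bF.coord j ∈ W := hWtop ▸ Submodule.mem_top
      obtain ⟨y, hyG, hyΨ⟩ := this
      exact ⟨y, hyG, hyΨ⟩
    choose y hyG hyΨ using hex
    -- projection
    set P : WeakBilin B →ₗ[ℝ] WeakBilin B :=
      ∑ j : Fin n, LinearMap.smulRight ((B.flip (y j) : E →ₗ[ℝ] ℝ) :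
        WeakBilin B →ₗ[ℝ] ℝ) (bF j : WeakBilin B) with hP
    have hPapp : ∀ x : WeakBilin B, P x = ∑ j : Fin n, B x (y j) • (bF j : WeakBilin B) := by
      intro x
      rw [hP, LinearMap.sum_apply]
      exact Finset.sum_congr rfl fun j _ => rfl
    have hPF : ∀ x : WeakBilin B, P x ∈ F := by
      intro x
      rw [hPapp]
      exact Submodule.sum_mem _ fun j _ => Submodule.smul_mem _ _ (bF j).2
    have hPfix : ∀ v ∈ F, P v = v := by
      intro v hv
      rw [hPapp]
      have hcoord : ∀ j, B v (y j) = bF.coord j ⟨v, hv⟩ := by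
        intro j
        rw [← hyΨ j, hΨ]
      calc ∑ j : Fin n, B v (y j) • (bF j : WeakBilin B)
          = ∑ j : Fin n, (bF.repr ⟨v, hv⟩ j) • (bF j : WeakBilin B) := by
            refine Finset.sum_congr rfl fun j _ => ?_
            rw [hcoord j, Module.Basis.coord_apply]
        _ = ((∑ j : Fin n, (bF.repr ⟨v, hv⟩ j) • bF j : F) : WeakBilin B) := by
            push_cast
            rfl
        _ = v := by rw [bF.sum_repr ⟨v, hv⟩]
    have hPR : ∀ z ∈ Submodule.span ℝ R, P z = 0 := by
      intro z hz
      have hle : Submodule.span ℝ R ≤ LinearMap.ker P := by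
        rw [Submodule.span_le]
        intro r hr
        simp only [SetLike.mem_coe, LinearMap.mem_ker]
        rw [hPapp]
        apply Finset.sum_eq_zero
        intro j _
        rw [h2 (y j) (hyG j) r hr, zero_smul]
      exact hle hz
    -- density
    set D : Submodule ℝ (WeakBilin B) := F ⊔ Submodule.span ℝ R with hD
    have hDdense : D.topologicalClosure = ⊤ := by
      by_contra hne
      have hex2 : ∃ x : WeakBilin B, x ∉ D.topologicalClosure := by
        by_contra hall
        push_neg at hall
        exact hne (Submodule.eq_top_iff'.2 hall)
      obtain ⟨x, hx⟩ := hex2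
      obtain ⟨yy, hyd, hyx⟩ := exists_functional B D x hx
      have hy0 : yy = 0 := by
        apply h1
        · intro z hz
          exact hyd z (Submodule.mem_sup_right (Submodule.subset_span hz))
        · intro v hv
          exact hyd v (Submodule.mem_sup_left hv)
      rw [hy0] at hyx
      simp at hyx
    intro x
    have hPcont : Continuous (fun w : WeakBilin B => P w) := by
      have hterm : ∀ j : Fin n, Continuous
          (fun w : WeakBilin B => B w (y j) • (bF j : WeakBilin B)) := by
        intro j
        exact (WeakBilin.eval_continuous B (y j)).smul continuous_const
      have hsum : Continuous (fun w : WeakBilin B =>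
          ∑ j : Fin n, B w (y j) • (bF j : WeakBilin B)) :=
        continuous_finset_sum _ fun j _ => hterm j
      have : (fun w : WeakBilin B => P w) = (fun w : WeakBilin B =>
          ∑ j : Fin n, B w (y j) • (bF j : WeakBilin B)) := funext hPapp
      rw [this]
      exact hsum
    have hQcont : Continuous (fun w : WeakBilin B => w - P w) :=
      continuous_id.sub hPcont
    have hQD : ∀ d ∈ D, d - P d ∈ Submodule.span ℝ R := by
      intro d hd
      obtain ⟨a, ha, r, hr, rfl⟩ := Submodule.mem_sup.1 hd
      rw [map_add, hPfix a ha, hPR r hr, add_zero, add_sub_cancel_left]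
      exact hr
    have hxcl : x ∈ closure (D : Set (WeakBilin B)) := by
      rw [← Submodule.topologicalClosure_coe, hDdense]
      trivial
    have hb : x - P x ∈ closure ((Submodule.span ℝ R : Submodule ℝ (WeakBilin B)) :
        Set (WeakBilin B)) := by
      have h1' : (fun w : WeakBilin B => w - P w) x ∈
          (fun w : WeakBilin B => w - P w) '' closure (D : Set (WeakBilin B)) :=
        Set.mem_image_of_mem _ hxcl
      have h2' := image_closure_subset_closure_image (s := (D : Set (WeakBilin B))) hQcont
      have h3' : closure ((fun w : WeakBilin B => w - P w) '' (D : Set (WeakBilin B))) ⊆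
          closure ((Submodule.span ℝ R : Submodule ℝ (WeakBilin B)) : Set (WeakBilin B)) := by
        apply closure_mono
        rintro _ ⟨d, hd, rfl⟩
        exact hQD d hd
      exact h3' (h2' h1')
    exact ⟨P x, hPF x, x - P x, hb, by abel⟩
  · rintro x ⟨hxF, hxC⟩
    have hx0 : x = 0 := h3 x hxF fun yy hyy => hkill yy hyy x hxC
    simp [hx0]

private theorem core2 (B : E →ₗ[ℝ] G →ₗ[ℝ] ℝ) (F : Submodule ℝ E) [FiniteDimensional ℝ F]
    (G' : Submodule ℝ G) (R : Set E)
    (h1 : ∀ y : G, (∀ z ∈ R, B z y = 0) → (∀ x ∈ F, B x y = 0) → y = 0)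
    (h2 : ∀ y ∈ G', ∀ z ∈ R, B z y = 0)
    (h3 : ∀ x ∈ F, (∀ y ∈ G', B x y = 0) → x = 0) :
    (∀ x : E, ∃ a ∈ F, ∃ b : E, b ∈ @closure (WeakBilin B) inferInstance
        ((Submodule.span ℝ R : Submodule ℝ E) : Set E) ∧ x = a + b) ∧
    (F : Set E) ∩ @closure (WeakBilin B) inferInstance
        ((Submodule.span ℝ R : Submodule ℝ E) : Set E) ⊆ {0} :=
  core B F ‹_› G' R h1 h2 h3


end AuxWeak

theorem stmt11 {ι : Type*} [Preorder ι] [Nonempty ι] [IsDirected ι (· ≤ ·)]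
    (ndp : NormingDualPair X Y) (AS : AverageScheme ndp ι)
    (hsep : ∀ x ∈ fixedSpace AS.S, x ≠ 0 → ∃ y ∈ AS.fix', ndp.p x y ≠ 0)
    (hsep' : ∀ y ∈ AS.fix', y ≠ 0 → ∃ x ∈ fixedSpace AS.S, ndp.p x y ≠ 0)
    (hfd : FiniteDimensional ℝ (fixedSubmodule AS.S)) :
    ((∀ x : X, ∃ a ∈ fixedSpace AS.S,
        ∃ b ∈ @closure X ndp.sigma (Submodule.span ℝ (rangeIminus AS.S) : Set X), x = a + b) ∧
      fixedSpace AS.S ∩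
        @closure X ndp.sigma (Submodule.span ℝ (rangeIminus AS.S) : Set X) ⊆ {0}) ∧
    ((∀ y : Y, ∃ a ∈ AS.fix',
        ∃ b ∈ @closure Y ndp.sigma' (Submodule.span ℝ AS.rg' : Set Y), y = a + b) ∧
      AS.fix' ∩
        @closure Y ndp.sigma' (Submodule.span ℝ AS.rg' : Set Y) ⊆ {0}) := by
  classical
  -- separation from the norming property
  have sepX : ∀ x : X, (∀ y : Y, ndp.p x y = 0) → x = 0 := by
    intro x h
    have hnorm := ndp.norm_eq_left x
    have : ∀ y : {y : Y // ‖y‖ ≤ 1}, |ndp.p x y.1| = (0 : ℝ) := fun y => by simp [h y.1]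
    rw [show (fun y : {y : Y // ‖y‖ ≤ 1} => |ndp.p x y.1|) = fun _ => (0 : ℝ) from funext this]
      at hnorm
    haveI : Nonempty {y : Y // ‖y‖ ≤ 1} := ⟨⟨0, by simp⟩⟩
    rw [ciSup_const] at hnorm
    exact norm_eq_zero.1 hnorm
  have sepY : ∀ y : Y, (∀ x : X, ndp.p x y = 0) → y = 0 := by
    intro y h
    have hnorm := ndp.norm_eq_right y
    have : ∀ x : {x : X // ‖x‖ ≤ 1}, |ndp.p x.1 y| = (0 : ℝ) := fun x => by simp [h x.1]
    rw [show (fun x : {x : X // ‖x‖ ≤ 1} => |ndp.p x.1 y|) = fun _ => (0 : ℝ) from funext this]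
      at hnorm
    haveI : Nonempty {x : X // ‖x‖ ≤ 1} := ⟨⟨0, by simp⟩⟩
    rw [ciSup_const] at hnorm
    exact norm_eq_zero.1 hnorm
  -- fix' as a submodule
  let F' : Submodule ℝ Y :=
    { carrier := AS.fix'
      add_mem' := fun {a b} ha hb s hs => by rw [map_add, ha s hs, hb s hs]
      zero_mem' := fun s hs => map_zero _
      smul_mem' := fun c y hy s hs => by rw [map_smul, hy s hs] }
  have hF'mem : ∀ y : Y, y ∈ F' ↔ y ∈ AS.fix' := fun y => Iff.rfl
  haveI : FiniteDimensional ℝ (fixedSubmodule AS.S) := hfd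
  -- fix' is finite dimensional
  haveI hfd' : FiniteDimensional ℝ F' := by
    let f : F' →ₗ[ℝ] Module.Dual ℝ (fixedSubmodule AS.S) :=
      ((fixedSubmodule AS.S).subtype.dualMap.comp ndp.p.flip).comp F'.subtype
    have hf : ∀ (a : F') (v : fixedSubmodule AS.S), f a v = ndp.p v.1 a.1 := fun a v => rfl
    have hinj : Function.Injective f := by
      rw [injective_iff_map_eq_zero]
      intro a ha
      have h0 : ∀ v : fixedSubmodule AS.S, ndp.p v.1 a.1 = 0 := by
        intro v
        rw [← hf a v, ha]
        rfl
      by_contra hne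
      have hane : (a : Y) ≠ 0 := fun hc => hne (Subtype.ext hc)
      obtain ⟨x, hxfix, hxne⟩ := hsep' a.1 a.2 hane
      exact hxne (h0 ⟨x, hxfix⟩)
    exact FiniteDimensional.of_injective f hinj
  constructor
  · -- X side
    have h1X : ∀ y : Y, (∀ z ∈ rangeIminus AS.S, ndp.p z y = 0) →
        (∀ x ∈ fixedSubmodule AS.S, ndp.p x y = 0) → y = 0 := by
      intro y hR hF
      have hyfix : y ∈ AS.fix' := by
        intro s hs
        have hz : ∀ x : X, ndp.p x (AS.adj s y - y) = 0 := by
          intro x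
          have h1 := hR (x - s x) ⟨x, s, hs, rfl⟩
          have h2 : ndp.p (x - s x) y = ndp.p x y - ndp.p (s x) y := by
            rw [map_sub]; rfl
          have h3 := AS.adj_spec s hs x y
          rw [map_sub]
          rw [h2, h3] at h1
          linarith
        have := sepY (AS.adj s y - y) hz
        rw [sub_eq_zero] at this
        exact this
      by_contra hne
      obtain ⟨x, hxfix, hxne⟩ := hsep' y hyfix hne
      exact hxne (hF x hxfix)
    have h2X : ∀ y ∈ F', ∀ z ∈ rangeIminus AS.S, ndp.p z y = 0 := by
      rintro y hy z ⟨x, s, hs, rfl⟩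
      have h2 : ndp.p (x - s x) y = ndp.p x y - ndp.p (s x) y := by rw [map_sub]; rfl
      rw [h2, AS.adj_spec s hs x y, hy s hs, sub_self]
    have h3X : ∀ x ∈ fixedSubmodule AS.S, (∀ y ∈ F', ndp.p x y = 0) → x = 0 := by
      intro x hx hall
      by_contra hne
      obtain ⟨y, hyfix, hyne⟩ := hsep x hx hne
      exact hyne (hall y hyfix)
    exact core2 ndp.p (fixedSubmodule AS.S) F' (rangeIminus AS.S) h1X h2X h3X
  · -- Y side
    have h1Y : ∀ x : X, (∀ z ∈ AS.rg', ndp.p.flip z x = 0) →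
        (∀ w ∈ F', ndp.p.flip w x = 0) → x = 0 := by
      intro x hR hF
      have hxfix : x ∈ fixedSpace AS.S := by
        intro s hs
        have hz : ∀ y : Y, ndp.p (x - s x) y = 0 := by
          intro y
          have h1 := hR (y - AS.adj s y) ⟨y, s, hs, rfl⟩
          have h2 : ndp.p.flip (y - AS.adj s y) x = ndp.p x y - ndp.p x (AS.adj s y) := by
            rw [map_sub]; rfl
          have h3 := AS.adj_spec s hs x y
          rw [h2, ← h3] at h1
          have h4 : ndp.p (x - s x) y = ndp.p x y - ndp.p (s x) y := by rw [map_sub]; rfl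
          rw [h4]
          linarith
        have := sepX (x - s x) hz
        rw [sub_eq_zero] at this
        exact this.symm
      by_contra hne
      obtain ⟨y, hyfix, hyne⟩ := hsep x hxfix hne
      exact hyne (hF y hyfix)
    have h2Y : ∀ x ∈ fixedSubmodule AS.S, ∀ z ∈ AS.rg', ndp.p.flip z x = 0 := by
      rintro x hx z ⟨y, s, hs, rfl⟩
      have h2 : ndp.p.flip (y - AS.adj s y) x = ndp.p x y - ndp.p x (AS.adj s y) := by
        rw [map_sub]; rfl
      rw [h2, ← AS.adj_spec s hs x y, hx s hs, sub_self]
    have h3Y : ∀ y ∈ F', (∀ x ∈ fixedSubmodule AS.S, ndp.p.flip y x = 0) → y = 0 := by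
      intro y hy hall
      by_contra hne
      obtain ⟨x, hxfix, hxne⟩ := hsep' y hy hne
      exact hxne (hall x hxfix)
    exact core2 ndp.p.flip F' (fixedSubmodule AS.S) AS.rg' h1Y h2Y h3Y
end
end

section
/- Let E be a Polish space with complete metric d, and let {T_j : j ∈ J} ⊆ L(C_b(E),σ) be a family of Markovian kernel operators with the e-property such that the family of probability measures {p_j(x,·) : j ∈ J} is tight for every x ∈ E, where p_j is the kernel of T_j. Then for every compact K ⊆ E and every ε > 0 there exists a compact L ⊆ E such that p_j(x, E∖L) ≤ 2ε for all x ∈ K and j ∈ J (i.e. {p_j(x,·) : j ∈ J, x ∈ K} is tight); consequently the operators {T_j} are β₀-equicontinuous. -/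
open Filter Topology MeasureTheory Metric
open scoped ENNReal NNReal

/-- The bump function `y ↦ max 0 (1 - infDist y C / η)`. -/
noncomputable def stmt17bump {E : Type*} [MetricSpace E] (C : Set E) (η : ℝ) : E → ℝ :=
  fun y => max 0 (1 - Metric.infDist y C / η)

lemma stmt17bump_lipschitz {E : Type*} [MetricSpace E] (C : Set E) {η : ℝ} (hη : 0 < η) :
    LipschitzWith (η⁻¹).toNNReal (stmt17bump C η) := by
  apply LipschitzWith.of_dist_le_mul
  intro a b
  have h1 : dist (stmt17bump C η a) (stmt17bump C η b)
      ≤ |(1 - Metric.infDist a C / η) - (1 - Metric.infDist b C / η)| := by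
    rw [Real.dist_eq, stmt17bump, stmt17bump, max_comm 0 _, max_comm 0 _]
    exact abs_max_sub_max_le_abs _ _ 0
  have h2 : (1 - Metric.infDist a C / η) - (1 - Metric.infDist b C / η)
      = (Metric.infDist b C - Metric.infDist a C) / η := by ring
  rw [h2, abs_div, abs_of_pos hη] at h1
  have h3 : |Metric.infDist b C - Metric.infDist a C| ≤ dist a b := by
    rw [abs_sub_comm]
    simpa [Real.dist_eq] using (Metric.lipschitz_infDist_pt C).dist_le_mul a b
  calc dist (stmt17bump C η a) (stmt17bump C η b)
      ≤ dist a b / η := h1.trans (by gcongr)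
    _ = (η⁻¹).toNNReal * dist a b := by
        rw [Real.coe_toNNReal _ (by positivity)]; ring

lemma stmt17bump_mem_Icc {E : Type*} [MetricSpace E] (C : Set E) {η : ℝ} (hη : 0 < η) (y : E) :
    stmt17bump C η y ∈ Set.Icc (0:ℝ) 1 := by
  constructor
  · exact le_max_left _ _
  · have h0 : (0:ℝ) ≤ Metric.infDist y C := Metric.infDist_nonneg
    have : Metric.infDist y C / η ≥ 0 := by positivity
    simp only [stmt17bump, max_le_iff]
    constructor <;> linarith

/-- The bump as a bounded continuous function. -/
noncomputable def stmt17bumpBCF {E : Type*} [MetricSpace E] (C : Set E) (η : ℝ) (hη : 0 < η) :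
    BoundedContinuousFunction E ℝ :=
  BoundedContinuousFunction.mkOfBound
    ⟨stmt17bump C η, (stmt17bump_lipschitz C hη).continuous⟩ 1
    (by
      intro a b
      have ha := stmt17bump_mem_Icc C hη a
      have hb := stmt17bump_mem_Icc C hη b
      rw [Real.dist_eq, abs_le]
      constructor <;> simp_all <;> linarith [ha.1, ha.2, hb.1, hb.2])

lemma stmt17bumpBCF_apply {E : Type*} [MetricSpace E] (C : Set E) (η : ℝ) (hη : 0 < η) (y : E) :
    stmt17bumpBCF C η hη y = stmt17bump C η y := rfl

/-- Step A: uniform tightness at a single scale (cthickening form). -/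
lemma stmt17stepA {E : Type*} [MetricSpace E] [CompleteSpace E]
    [TopologicalSpace.SeparableSpace E] [MeasurableSpace E] [BorelSpace E]
    {J : Type*}
    (T : J → (BoundedContinuousFunction E ℝ) →L[ℝ] (BoundedContinuousFunction E ℝ))
    (p : J → E → Measure E)
    (hprob : ∀ (j : J) (x : E), IsProbabilityMeasure (p j x))
    (hker : ∀ (j : J) (f : BoundedContinuousFunction E ℝ) (x : E),
      (T j f) x = ∫ y, f y ∂(p j x))
    (heprop : ∀ f : BoundedContinuousFunction E ℝ, (∃ c : NNReal, LipschitzWith c ⇑f) →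
      ∀ (x : E) (ε : ℝ), 0 < ε → ∃ δ > 0, ∀ (j : J) (y : E),
        dist x y < δ → |(T j f) y - (T j f) x| ≤ ε)
    (htight : ∀ (x : E) (ε : ℝ), 0 < ε → ∃ K : Set E, IsCompact K ∧
      ∀ j : J, p j x Kᶜ ≤ ENNReal.ofReal ε)
    (K : Set E) (hK : IsCompact K) (ε η : ℝ) (hε : 0 < ε) (hη : 0 < η) :
    ∃ C : Set E, IsCompact C ∧
      ∀ (j : J), ∀ x ∈ K, p j x (Metric.cthickening η C)ᶜ ≤ ENNReal.ofReal ε := by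
  -- pointwise statement
  have hpt : ∀ x : E, ∃ δ > 0, ∃ C : Set E, IsCompact C ∧
      ∀ (j : J) (y : E), y ∈ Metric.ball x δ →
        p j y (Metric.cthickening η C)ᶜ ≤ ENNReal.ofReal ε := by
    intro x
    obtain ⟨C₀, hC₀c, hC₀⟩ := htight x (ε/2) (by linarith)
    set C : Set E := insert x C₀ with hCdef
    have hCc : IsCompact C := hC₀c.insert x
    have hCne : C.Nonempty := ⟨x, Set.mem_insert x C₀⟩
    have hCm : MeasurableSet C := hCc.isClosed.measurableSet
    set F := stmt17bumpBCF C η hη with hFdef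
    obtain ⟨δ, hδpos, hδ⟩ := heprop F ⟨_, stmt17bump_lipschitz C hη⟩ x (ε/2) (by linarith)
    refine ⟨δ, hδpos, C, hCc, ?_⟩
    intro j y hy
    haveI := hprob j x
    haveI := hprob j y
    -- lower bound on ∫ F d(p j x)
    have hFint : ∀ (z : E) (k : J), Integrable (fun w => F w) (p k z) :=
      fun z k => F.integrable (p k z)
    have hind_le : ∀ w, Set.indicator C (1 : E → ℝ) w ≤ F w := by
      intro w
      by_cases hw : w ∈ C
      · rw [Set.indicator_of_mem hw]
        have : Metric.infDist w C = 0 := Metric.infDist_zero_of_mem hw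
        simp [hFdef, stmt17bumpBCF_apply, stmt17bump, this, hη.le]
      · rw [Set.indicator_of_notMem hw]
        exact (stmt17bump_mem_Icc C hη w).1
    have hle_ind : ∀ w, F w ≤ Set.indicator (Metric.cthickening η C) (1 : E → ℝ) w := by
      intro w
      by_cases hw : w ∈ Metric.cthickening η C
      · rw [Set.indicator_of_mem hw]
        exact (stmt17bump_mem_Icc C hη w).2
      · rw [Set.indicator_of_notMem hw]
        have hwt : w ∉ Metric.thickening η C :=
          fun h => hw (Metric.thickening_subset_cthickening η C h)
        rw [Metric.mem_thickening_iff_infDist_lt hCne, not_lt] at hwt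
        have : 1 - Metric.infDist w C / η ≤ 0 := by
          have : (1:ℝ) ≤ Metric.infDist w C / η := (one_le_div hη).2 hwt
          linarith
        simp [hFdef, stmt17bumpBCF_apply, stmt17bump, max_eq_left this]
    -- p j x C ≥ 1 - ε/2 in reals
    have hCx : (p j x C).toReal ≥ 1 - ε/2 := by
      have h1 : p j x Cᶜ ≤ ENNReal.ofReal (ε/2) := by
        refine le_trans (measure_mono ?_) (hC₀ j)
        exact Set.compl_subset_compl.2 (Set.subset_insert x C₀)
      have h2 : p j x Cᶜ = 1 - p j x C := prob_compl_eq_one_sub hCm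
      have h3 : (p j x C) ≤ 1 := prob_le_one
      have h4 : (1 : ℝ≥0∞) - p j x C ≤ ENNReal.ofReal (ε/2) := h2 ▸ h1
      have h5 : (1:ℝ) - (p j x C).toReal ≤ ε/2 := by
        have := ENNReal.toReal_mono (by simp) h4
        rwa [ENNReal.toReal_sub_of_le h3 (by simp), ENNReal.toReal_one,
          ENNReal.toReal_ofReal (by linarith)] at this
      linarith
    have hint_x : (1:ℝ) - ε/2 ≤ ∫ w, F w ∂(p j x) := by
      have h1 : ∫ w, Set.indicator C (1 : E → ℝ) w ∂(p j x) ≤ ∫ w, F w ∂(p j x) := by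
        apply integral_mono _ (hFint x j) hind_le
        exact (integrable_const (1:ℝ)).indicator hCm
      rw [integral_indicator_one hCm] at h1
      linarith [show (p j x).real C = (p j x C).toReal from rfl]
    -- transfer to y via e-property
    have hTxy : |(T j F) y - (T j F) x| ≤ ε/2 := hδ j y (by rwa [Metric.mem_ball, dist_comm] at hy)
    have hint_y : (1:ℝ) - ε ≤ ∫ w, F w ∂(p j y) := by
      have hx' := hker j F x
      have hy' := hker j F y
      have : (T j F) x - ε/2 ≤ (T j F) y := by
        cases' abs_le.1 hTxy with h1 h2; linarith
      rw [hx', hy'] at this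
      linarith
    -- upper bound: ∫ F ≤ p j y (cthickening η C)
    have hthm : MeasurableSet (Metric.cthickening η C) :=
      Metric.isClosed_cthickening.measurableSet
    have hup : ∫ w, F w ∂(p j y) ≤ (p j y (Metric.cthickening η C)).toReal := by
      have : ∫ w, F w ∂(p j y)
          ≤ ∫ w, Set.indicator (Metric.cthickening η C) (1 : E → ℝ) w ∂(p j y) := by
        apply integral_mono (hFint y j) _ hle_ind
        exact (integrable_const (1:ℝ)).indicator hthm
      rwa [integral_indicator_one hthm] at this
    -- conclude
    have hmain : 1 - ε ≤ (p j y (Metric.cthickening η C)).toReal := le_trans hint_y hup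
    have hc : p j y (Metric.cthickening η C)ᶜ = 1 - p j y (Metric.cthickening η C) :=
      prob_compl_eq_one_sub hthm
    rw [hc]
    rw [ENNReal.le_ofReal_iff_toReal_le (by simp [ENNReal.sub_ne_top]) hε.le]
    have h3 : (p j y (Metric.cthickening η C)) ≤ 1 := prob_le_one
    rw [ENNReal.toReal_sub_of_le h3 (by simp), ENNReal.toReal_one]
    linarith
  -- compactness argument
  choose δ hδpos C hCc hC using hpt
  obtain ⟨t, -, ht⟩ := hK.elim_nhds_subcover (fun x => Metric.ball x (δ x))
    (fun x _ => Metric.ball_mem_nhds x (hδpos x))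
  refine ⟨⋃ x ∈ t, C x, t.finite_toSet.isCompact_biUnion (fun x _ => hCc x), ?_⟩
  intro j x hx
  obtain ⟨i, hit, hxi⟩ := Set.mem_iUnion₂.1 (ht hx)
  refine le_trans (measure_mono ?_) (hC i j x hxi)
  apply Set.compl_subset_compl.2
  exact Metric.cthickening_subset_of_subset η (Set.subset_biUnion_of_mem hit)

/-- Lemma 5.5: a family of Markovian kernel operators on `C_b(E)` with the e-property
whose kernels are tight at every point has uniformly tight kernels over compact sets;
consequently the operators are `β₀`-equicontinuous (characterized by exactly this
uniform tightness over compacts). -/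
theorem stmt17 {E : Type*} [MetricSpace E] [CompleteSpace E]
    [TopologicalSpace.SeparableSpace E] [MeasurableSpace E] [BorelSpace E]
    {J : Type*}
    (T : J → (BoundedContinuousFunction E ℝ) →L[ℝ] (BoundedContinuousFunction E ℝ))
    (p : J → E → Measure E)
    (hprob : ∀ (j : J) (x : E), IsProbabilityMeasure (p j x))
    (hker : ∀ (j : J) (f : BoundedContinuousFunction E ℝ) (x : E),
      (T j f) x = ∫ y, f y ∂(p j x))
    (heprop : ∀ f : BoundedContinuousFunction E ℝ, (∃ c : NNReal, LipschitzWith c ⇑f) →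
      ∀ (x : E) (ε : ℝ), 0 < ε → ∃ δ > 0, ∀ (j : J) (y : E),
        dist x y < δ → |(T j f) y - (T j f) x| ≤ ε)
    (htight : ∀ (x : E) (ε : ℝ), 0 < ε → ∃ K : Set E, IsCompact K ∧
      ∀ j : J, p j x Kᶜ ≤ ENNReal.ofReal ε) :
    (∀ K : Set E, IsCompact K → ∀ ε : ℝ, 0 < ε → ∃ L : Set E, IsCompact L ∧
      ∀ (j : J), ∀ x ∈ K, p j x Lᶜ ≤ ENNReal.ofReal (2 * ε)) ∧
    (∀ K : Set E, IsCompact K → ∀ ε : ℝ, 0 < ε → ∃ L : Set E, IsCompact L ∧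
      ∀ (j : J), ∀ x ∈ K, p j x Lᶜ ≤ ENNReal.ofReal ε) := by
  have main : ∀ K : Set E, IsCompact K → ∀ ε : ℝ, 0 < ε → ∃ L : Set E, IsCompact L ∧
      ∀ (j : J), ∀ x ∈ K, p j x Lᶜ ≤ ENNReal.ofReal ε := by
    intro K hK ε hε
    -- apply step A at all scales
    have hs : ∀ n : ℕ, ∃ C : Set E, IsCompact C ∧
        ∀ (j : J), ∀ x ∈ K, p j x (Metric.cthickening (1/(n+1)) C)ᶜ
          ≤ ENNReal.ofReal (ε * (1/2)^(n+1)) := by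
      intro n
      exact stmt17stepA T p hprob hker heprop htight K hK _ _ (by positivity) (by positivity)
    choose C hCc hC using hs
    set A : ℕ → Set E := fun n => Metric.cthickening (1/(n+1)) (C n) with hAdef
    set L : Set E := closure (⋂ n, A n) with hLdef
    have hLtb : TotallyBounded (⋂ n, A n) := by
      rw [Metric.totallyBounded_iff]
      intro r hr
      obtain ⟨n, hn⟩ := exists_nat_one_div_lt (show (0:ℝ) < r/2 by linarith)
      obtain ⟨s, hsfin, hs⟩ := Metric.totallyBounded_iff.1 (hCc n).totallyBounded
        (r/4) (by linarith)
      refine ⟨s, hsfin, ?_⟩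
      intro z hz
      have hzA : z ∈ A n := Set.mem_iInter.1 hz n
      rcases Set.eq_empty_or_nonempty (C n) with hCe | hCne
      · rw [hAdef] at hzA
        simp only [hCe, Metric.cthickening_empty] at hzA
        exact absurd hzA (Set.notMem_empty z)
      · have hzd : Metric.infDist z (C n) < r/2 := by
          have h1 : Metric.infDist z (C n) ≤ 1/(n+1) := by
            have := (Metric.mem_cthickening_iff).1 hzA
            have h2 : Metric.infDist z (C n) = (EMetric.infEdist z (C n)).toReal := rfl
            rw [h2]
            calc (EMetric.infEdist z (C n)).toReal
                ≤ (ENNReal.ofReal (1/(n+1))).toReal := by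
                  apply ENNReal.toReal_mono (by simp) this
              _ = 1/(n+1) := ENNReal.toReal_ofReal (by positivity)
          linarith
        obtain ⟨c, hcC, hcd⟩ := (Metric.infDist_lt_iff hCne).1 hzd
        obtain ⟨y, hys, hyc⟩ := Set.mem_iUnion₂.1 (hs hcC)
        refine Set.mem_iUnion₂.2 ⟨y, hys, ?_⟩
        rw [Metric.mem_ball] at hyc ⊢
        calc dist z y ≤ dist z c + dist c y := dist_triangle z c y
          _ < r/2 + r/4 := by gcongr
          _ < r := by linarith
    have hLc : IsCompact L := TotallyBounded.isCompact_of_isClosed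
      hLtb.closure isClosed_closure
    refine ⟨L, hLc, ?_⟩
    intro j x hx
    have hsub : Lᶜ ⊆ ⋃ n, (A n)ᶜ := by
      rw [← Set.compl_iInter]
      exact Set.compl_subset_compl.2 subset_closure
    calc p j x Lᶜ ≤ p j x (⋃ n, (A n)ᶜ) := measure_mono hsub
      _ ≤ ∑' n, p j x (A n)ᶜ := measure_iUnion_le _
      _ ≤ ∑' n : ℕ, ENNReal.ofReal (ε * (1/2)^(n+1)) := ENNReal.tsum_le_tsum (fun n => hC n j x hx)
      _ = ENNReal.ofReal ε := by
          have heq : ∀ n : ℕ, ENNReal.ofReal (ε * (1/2)^(n+1))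
              = ENNReal.ofReal ε * (2:ℝ≥0∞)⁻¹ ^ (n+1) := by
            intro n
            rw [ENNReal.ofReal_mul hε.le, ENNReal.ofReal_pow (by norm_num)]
            congr 1
            rw [show (1:ℝ)/2 = (2:ℝ)⁻¹ by norm_num, ENNReal.ofReal_inv_of_pos (by norm_num)]
            norm_num
          simp_rw [heq]
          rw [ENNReal.tsum_mul_left]
          have : ∑' n : ℕ, (2:ℝ≥0∞)⁻¹ ^ (n+1) = 1 := by
            simp_rw [pow_succ]
            rw [ENNReal.tsum_mul_right, ENNReal.tsum_geometric, ENNReal.one_sub_inv_two]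
            rw [inv_inv]
            exact ENNReal.mul_inv_cancel (by norm_num) (by norm_num)
          rw [this, mul_one]
  refine ⟨?_, main⟩
  intro K hK ε hε
  obtain ⟨L, hLc, hL⟩ := main K hK ε hε
  exact ⟨L, hLc, fun j x hx => (hL j x hx).trans
    (ENNReal.ofReal_le_ofReal (by linarith))⟩
end
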